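/- For all real numbers p, q, n with 0 < p ≤ q < 1 and n ≥ 1, one has ((1 − p/n)/(1 − q/n))^(n−p) ≤ ((1−p)/(1−q))^(1−p), where the exponents denote real powers. -/

import Mathlib

/-- For all real `p, q, n` with `0 < p ≤ q < 1` and `n ≥ 1`,
`((1 − p/n)/(1 − q/n))^(n−p) ≤ ((1−p)/(1−q))^(1−p)` (real powers). -/
theorem rpow_ratio_le (p q n : ℝ) (hp : 0 < p) (hpq : p ≤ q) (hq : q < 1) (hn : 1 ≤ n) :
    ((1 - p / n) / (1 - q / n)) ^ (n - p) ≤ ((1 - p) / (1 - q)) ^ (1 - p) := by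
  have hp1 : p < 1 := lt_of_le_of_lt hpq hq
  have hn0 : (0:ℝ) < n := lt_of_lt_of_le one_pos hn
  set f : ℝ → ℝ := fun x => (x - p) * (Real.log (x - p) - Real.log (x - q)) with hf
  have hder : ∀ x : ℝ, q < x →
      HasDerivAt f (1 * (Real.log (x - p) - Real.log (x - q))
        + (x - p) * (1/(x-p) - 1/(x-q))) x := by
    intro x hx
    have hxp : 0 < x - p := by linarith
    have hxq : 0 < x - q := by linarith
    have h1 : HasDerivAt (fun x : ℝ => x - p) 1 x := (hasDerivAt_id x).sub_const p
    have h1' : HasDerivAt (fun x : ℝ => x - q) 1 x := (hasDerivAt_id x).sub_const q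
    have h2 : HasDerivAt (fun x : ℝ => Real.log (x - p)) (1/(x-p)) x := by
      have := (Real.hasDerivAt_log hxp.ne').comp x h1
      simpa [one_div, Function.comp_def] using this
    have h3 : HasDerivAt (fun x : ℝ => Real.log (x - q)) (1/(x-q)) x := by
      have := (Real.hasDerivAt_log hxq.ne').comp x h1'
      simpa [one_div, Function.comp_def] using this
    exact h1.mul (h2.sub h3)
  have hanti : AntitoneOn f (Set.Ici 1) := by
    apply antitoneOn_of_deriv_nonpos (convex_Ici 1)
    · intro x hx
      have hx1 : (1:ℝ) ≤ x := hx
      exact (hder x (by linarith)).continuousAt.continuousWithinAt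
    · intro x hx
      rw [interior_Ici] at hx
      have hx1 : (1:ℝ) < x := hx
      exact ((hder x (by linarith)).differentiableAt.differentiableWithinAt)
    · intro x hx
      rw [interior_Ici] at hx
      have hx1 : (1:ℝ) < x := hx
      have hxp : 0 < x - p := by linarith
      have hxq : 0 < x - q := by linarith
      rw [(hder x (by linarith)).deriv]
      have hlog : Real.log (x - p) - Real.log (x - q) = Real.log ((x-p)/(x-q)) :=
        (Real.log_div hxp.ne' hxq.ne').symm
      have hle : Real.log ((x-p)/(x-q)) ≤ (x-p)/(x-q) - 1 :=
        Real.log_le_sub_one_of_pos (div_pos hxp hxq)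
      have hrw : (x - p) * (1/(x-p) - 1/(x-q)) = 1 - (x-p)/(x-q) := by
        field_simp
      rw [hlog, hrw]
      linarith
  have hfnf1 : f n ≤ f 1 := hanti (Set.self_mem_Ici) (Set.mem_Ici.mpr hn) hn
  have hnp : 0 < n - p := by linarith
  have hnq : 0 < n - q := by linarith
  have h1p : 0 < 1 - p := by linarith
  have h1q : 0 < 1 - q := by linarith
  have hb : (1 - p / n) / (1 - q / n) = (n - p) / (n - q) := by
    rw [div_eq_div_iff]
    · field_simp
    · have : 1 - q / n = (n - q) / n := by field_simp
      rw [this]; positivity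
    · positivity
  rw [hb]
  rw [Real.rpow_def_of_pos (div_pos hnp hnq), Real.rpow_def_of_pos (div_pos h1p h1q)]
  apply Real.exp_le_exp.mpr
  rw [Real.log_div hnp.ne' hnq.ne', Real.log_div h1p.ne' h1q.ne']
  have h1 : f 1 = (1 - p) * (Real.log (1 - p) - Real.log (1 - q)) := rfl
  have h2 : f n = (n - p) * (Real.log (n - p) - Real.log (n - q)) := rfl
  calc (Real.log (n-p) - Real.log (n-q)) * (n - p) = f n := by rw [h2]; ring
    _ ≤ f 1 := hfnf1
    _ = (Real.log (1-p) - Real.log (1-q)) * (1 - p) := by rw [h1]; ring
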